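/- Let θ, φ ∈ [0, π/2], ψ ∈ [0, π], A ∈ {−1, 1}, and σ ∈ [0, 2π). Define f = sin²θ + sin²φ − 2A sinθ sinφ cosσ and g = 2 + cos²θ + cos²φ − 2cosσ(A cosθ cosφ cosψ + cosψ) + 2sinσ(A cosφ sinψ + cosθ sinψ). Then f ≥ 0, and the maximum over A and σ of f − g equals −2cos²θ − 2cos²φ + 2√(cos²ψ(1 + cos²θcos²φ) + sin²ψ(cos²θ + cos²φ) + sin²θsin²φ − 2cosθcosφcosψ sinθ sinφ + 2|cosθcosφ − cosψ sinθ sinφ|). -/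

import Mathlib

open Real

lemma exists_angle (x y : ℝ) (h : x^2 + y^2 = 1) :
    ∃ σ ∈ Set.Ico 0 (2*π), Real.cos σ = x ∧ Real.sin σ = y := by
  have hpi := Real.pi_pos
  have hx1 : -1 ≤ x := by nlinarith [sq_nonneg y, sq_nonneg (x+1)]
  have hx2 : x ≤ 1 := by nlinarith [sq_nonneg y, sq_nonneg (x-1)]
  rcases le_or_gt 0 y with hy | hy
  · refine ⟨Real.arccos x, ⟨Real.arccos_nonneg x, ?_⟩, Real.cos_arccos hx1 hx2, ?_⟩
    · have := Real.arccos_le_pi x; linarith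
    · rw [Real.sin_arccos]
      have hxy : (1 : ℝ) - x^2 = y^2 := by linarith
      rw [hxy, Real.sqrt_sq hy]
  · have hxlt : x < 1 := by nlinarith
    have hpos : 0 < Real.arccos x := Real.arccos_pos.2 hxlt
    have hle := Real.arccos_le_pi x
    refine ⟨2*π - Real.arccos x, ⟨by linarith, by linarith⟩, ?_, ?_⟩
    · rw [Real.cos_sub, Real.cos_two_pi, Real.sin_two_pi, Real.cos_arccos hx1 hx2]; ring
    · rw [Real.sin_sub, Real.cos_two_pi, Real.sin_two_pi, Real.sin_arccos]
      have hxy : (1 : ℝ) - x^2 = y^2 := by linarith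
      rw [hxy, Real.sqrt_sq_eq_abs, abs_of_neg hy]; ring

lemma exists_angle' (P Q : ℝ) :
    ∃ σ ∈ Set.Ico 0 (2*π),
      Real.cos σ * P - Real.sin σ * Q = Real.sqrt (P^2 + Q^2) := by
  have hpi := Real.pi_pos
  rcases eq_or_lt_of_le (by positivity : (0:ℝ) ≤ P^2 + Q^2) with h | h
  · have hP : P = 0 := by nlinarith [sq_nonneg P, sq_nonneg Q]
    have hQ : Q = 0 := by nlinarith [sq_nonneg P, sq_nonneg Q]
    refine ⟨0, ⟨le_refl 0, by linarith⟩, ?_⟩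
    simp [hP, hQ]
  · have hRpos : 0 < Real.sqrt (P^2+Q^2) := Real.sqrt_pos.2 h
    have hR2 : Real.sqrt (P^2+Q^2)^2 = P^2+Q^2 := Real.sq_sqrt h.le
    obtain ⟨σ, hσ, hc, hs⟩ := exists_angle (P/Real.sqrt (P^2+Q^2)) (-Q/Real.sqrt (P^2+Q^2))
      (by field_simp; linarith)
    refine ⟨σ, hσ, ?_⟩
    rw [hc, hs]
    field_simp
    linarith

lemma cs_bound (P Q σ : ℝ) :
    Real.cos σ * P - Real.sin σ * Q ≤ Real.sqrt (P^2 + Q^2) := by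
  have h0 : (0:ℝ) ≤ P^2 + Q^2 := by positivity
  have h1 := Real.sq_sqrt h0
  have h2 := Real.sqrt_nonneg (P^2+Q^2)
  have h3 := Real.sin_sq_add_cos_sq σ
  nlinarith [sq_nonneg (Real.cos σ * P - Real.sin σ * Q - Real.sqrt (P^2+Q^2)),
    sq_nonneg (Real.sin σ * P + Real.cos σ * Q)]

theorem optimal_coupling_max (θ φ ψ : ℝ) (hθ : θ ∈ Set.Icc 0 (π/2))
    (hφ : φ ∈ Set.Icc 0 (π/2)) (hψ : ψ ∈ Set.Icc 0 π)
    (f g : ℝ → ℝ → ℝ)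
    (hf : f = fun A σ => sin θ ^ 2 + sin φ ^ 2 - 2 * A * sin θ * sin φ * cos σ)
    (hg : g = fun A σ => 2 + cos θ ^ 2 + cos φ ^ 2
        - 2 * cos σ * (A * cos θ * cos φ * cos ψ + cos ψ)
        + 2 * sin σ * (A * cos φ * sin ψ + cos θ * sin ψ)) :
    (∀ A ∈ ({-1, 1} : Set ℝ), ∀ σ ∈ Set.Ico 0 (2*π), 0 ≤ f A σ) ∧
    IsGreatest
      {v : ℝ | ∃ A ∈ ({-1, 1} : Set ℝ), ∃ σ ∈ Set.Ico 0 (2*π), v = f A σ - g A σ}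
      (-2 * cos θ ^ 2 - 2 * cos φ ^ 2 +
        2 * Real.sqrt (cos ψ ^ 2 * (1 + cos θ ^ 2 * cos φ ^ 2)
          + sin ψ ^ 2 * (cos θ ^ 2 + cos φ ^ 2) + sin θ ^ 2 * sin φ ^ 2
          - 2 * cos θ * cos φ * cos ψ * sin θ * sin φ
          + 2 * |cos θ * cos φ - cos ψ * sin θ * sin φ|)) := by
  obtain ⟨hθ0, hθ1⟩ := hθ
  obtain ⟨hφ0, hφ1⟩ := hφ
  have hpi := Real.pi_pos
  have hs1 : 0 ≤ Real.sin θ := Real.sin_nonneg_of_nonneg_of_le_pi hθ0 (by linarith)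
  have hs2 : 0 ≤ Real.sin φ := Real.sin_nonneg_of_nonneg_of_le_pi hφ0 (by linarith)
  subst hf hg
  have pyth1 : Real.sin θ^2 + Real.cos θ^2 = 1 := Real.sin_sq_add_cos_sq θ
  have pyth2 : Real.sin φ^2 + Real.cos φ^2 = 1 := Real.sin_sq_add_cos_sq φ
  have pyth3 : Real.sin ψ^2 + Real.cos ψ^2 = 1 := Real.sin_sq_add_cos_sq ψ
  set c1 := Real.cos θ with hc1
  set c2 := Real.cos φ with hc2
  set c3 := Real.cos ψ with hc3
  set s1 := Real.sin θ with hsd1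
  set s2 := Real.sin φ with hsd2
  set s3 := Real.sin ψ with hsd3
  set D := c1*c2 - c3*s1*s2 with hD
  have key : ∀ A : ℝ, A = -1 ∨ A = 1 →
      (A*(c1*c2*c3 - s1*s2) + c3)^2 + (A*c2*s3 + c1*s3)^2
        = c3^2*(1 + c1^2*c2^2) + s3^2*(c1^2+c2^2) + s1^2*s2^2
          - 2*c1*c2*c3*s1*s2 + 2*A*D := by
    rintro A (rfl | rfl)
    · rw [hD]; linear_combination (-(2*c1*c2)) * pyth3
    · rw [hD]; linear_combination (2*c1*c2) * pyth3
  have fg : ∀ A σ : ℝ,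
      (s1 ^ 2 + s2 ^ 2 - 2 * A * s1 * s2 * Real.cos σ)
        - (2 + c1 ^ 2 + c2 ^ 2 - 2 * Real.cos σ * (A * c1 * c2 * c3 + c3)
            + 2 * Real.sin σ * (A * c2 * s3 + c1 * s3))
      = -2*c1^2 - 2*c2^2
        + 2*(Real.cos σ * (A*(c1*c2*c3 - s1*s2) + c3) - Real.sin σ * (A*c2*s3 + c1*s3)) := by
    intro A σ
    linear_combination pyth1 + pyth2
  constructor
  · rintro A hA σ -
    simp only [Set.mem_insert_iff, Set.mem_singleton_iff] at hA
    rcases hA with rfl | rfl <;> simp only <;>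
      nlinarith [Real.neg_one_le_cos σ, Real.cos_le_one σ, mul_nonneg hs1 hs2,
        sq_nonneg (s1 - s2), sq_nonneg (s1 + s2)]
  · constructor
    · -- membership
      set A0 : ℝ := if 0 ≤ D then 1 else -1 with hA0
      have hA0mem : A0 = -1 ∨ A0 = 1 := by
        rw [hA0]; split <;> simp
      have hA0D : A0 * D = |D| := by
        rw [hA0]; split
        · rw [abs_of_nonneg ‹_›]; ring
        · rw [abs_of_neg (lt_of_not_ge ‹_›)]; ring
      have hkey := key A0 hA0mem
      obtain ⟨σ0, hσ0, hval⟩ := exists_angle' (A0*(c1*c2*c3 - s1*s2) + c3) (A0*c2*s3 + c1*s3)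
      have hsqrt : Real.sqrt ((A0*(c1*c2*c3 - s1*s2) + c3)^2 + (A0*c2*s3 + c1*s3)^2)
          = Real.sqrt (c3^2*(1 + c1^2*c2^2) + s3^2*(c1^2+c2^2) + s1^2*s2^2
              - 2*c1*c2*c3*s1*s2 + 2*|D|) := by
        rw [hkey, ← hA0D]; ring_nf
      refine ⟨A0, ?_, σ0, hσ0, ?_⟩
      · rcases hA0mem with h | h <;> simp [h]
      · have := fg A0 σ0
        simp only
        rw [hsqrt] at hval
        linarith [this, hval]
    · rintro v ⟨A, hA, σ, hσ, rfl⟩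
      simp only [Set.mem_insert_iff, Set.mem_singleton_iff] at hA
      have hA' : A = -1 ∨ A = 1 := hA
      have hAD : 2*A*D ≤ 2*|D| := by
        rcases hA' with rfl | rfl
        · linarith [neg_abs_le D]
        · linarith [le_abs_self D]
      have hkey := key A hA'
      have h1 : (A*(c1*c2*c3 - s1*s2) + c3)^2 + (A*c2*s3 + c1*s3)^2
          ≤ c3^2*(1 + c1^2*c2^2) + s3^2*(c1^2+c2^2) + s1^2*s2^2
            - 2*c1*c2*c3*s1*s2 + 2*|D| := by rw [hkey]; linarith
      have h2 := cs_bound (A*(c1*c2*c3 - s1*s2) + c3) (A*c2*s3 + c1*s3) σ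
      have h3 := Real.sqrt_le_sqrt h1
      have := fg A σ
      simp only
      linarith [this, h2, h3]
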